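/- Fix an integer M ≥ 1, layer sizes H_0, …, H_M ≥ 1, and a true parameter w₀. Let X be a random vector in ℝ^N (N = H_0) whose coordinates are independent and identically distributed with finite second moment and E[X_j²] > 0. Then the expected loss L(w) = E‖f(X; w) − f(X; w₀)‖² is a polynomial of total degree exactly 2M in the d matrix entries of w. -/

import Mathlib

open MvPolynomial MeasureTheory ProbabilityTheory

/-- The end-to-end matrix `W_M ⋯ W_1` of a deep linear network with layer sizes
`H 0, H 1, …` and weight matrices `w l : Matrix (Fin (H (l+1))) (Fin (H l)) ℝ`. -/
def dlnProd (H : ℕ → ℕ) (w : ∀ l : ℕ, Matrix (Fin (H (l + 1))) (Fin (H l)) ℝ) :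
    (M : ℕ) → Matrix (Fin (H M)) (Fin (H 0)) ℝ
  | 0 => 1
  | M + 1 => w M * dlnProd H w M

/-- Index type for the `d = Σ_{l=1}^M H_l H_{l-1}` matrix entries of the parameter
`w = (W_1, …, W_M)`. -/
abbrev DlnVars (H : ℕ → ℕ) (M : ℕ) := (l : Fin M) × (Fin (H (l.1 + 1)) × Fin (H l.1))

def dlnVarEmb (H : ℕ → ℕ) (M : ℕ) : DlnVars H M → DlnVars H (M + 1) :=
  fun v => ⟨v.1.castSucc, v.2⟩

noncomputable def dlnPoly (H : ℕ → ℕ) :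
    (M : ℕ) → Matrix (Fin (H M)) (Fin (H 0)) (MvPolynomial (DlnVars H M) ℝ)
  | 0 => 1
  | M + 1 =>
      (Matrix.of (fun a b =>
          (X (⟨Fin.last M, (a, b)⟩ : DlnVars H (M + 1)) : MvPolynomial (DlnVars H (M + 1)) ℝ)) :
          Matrix (Fin (H (M + 1))) (Fin (H M)) (MvPolynomial (DlnVars H (M + 1)) ℝ)) *
        (dlnPoly H M).map (rename (dlnVarEmb H M))

lemma dlnPoly_eval (H : ℕ → ℕ) (w : ∀ l : ℕ, Matrix (Fin (H (l + 1))) (Fin (H l)) ℝ) :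
    ∀ (M : ℕ) (i : Fin (H M)) (j : Fin (H 0)),
      eval (fun v : DlnVars H M => w v.1.1 v.2.1 v.2.2) (dlnPoly H M i j) = dlnProd H w M i j
  | 0, i, j => by
      simp [dlnPoly, dlnProd, Matrix.one_apply, apply_ite (eval _)]
  | M + 1, i, j => by
      simp only [dlnPoly, dlnProd, Matrix.mul_apply, Matrix.of_apply, Matrix.map_apply]
      rw [map_sum]
      refine Finset.sum_congr rfl fun k _ => ?_
      rw [map_mul, eval_X, eval_rename]
      congr 1
      exact dlnPoly_eval H w M k j

lemma dlnPoly_homog (H : ℕ → ℕ) :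
    ∀ (M : ℕ) (i : Fin (H M)) (j : Fin (H 0)), (dlnPoly H M i j).IsHomogeneous M
  | 0, i, j => by
      simp only [dlnPoly]
      rw [Matrix.one_apply]
      split
      · exact isHomogeneous_one _ _
      · exact isHomogeneous_zero _ _ _
  | M + 1, i, j => by
      simp only [dlnPoly, Matrix.mul_apply, Matrix.of_apply, Matrix.map_apply]
      apply IsHomogeneous.sum
      intro k _
      have h1 := (dlnPoly_homog H M k j).rename_isHomogeneous (f := dlnVarEmb H M)
      have h2 : (X (⟨Fin.last M, (i, k)⟩ : DlnVars H (M + 1)) :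
          MvPolynomial (DlnVars H (M + 1)) ℝ).IsHomogeneous 1 := isHomogeneous_X _ _
      have := h2.mul h1
      rwa [Nat.add_comm 1 M] at this

lemma dlnProd_ones_pos (H : ℕ → ℕ) :
    ∀ (M : ℕ), (∀ l ≤ M + 1, 1 ≤ H l) → ∀ (i : Fin (H (M + 1))) (j : Fin (H 0)),
      0 < dlnProd H (fun _ => Matrix.of fun _ _ => (1 : ℝ)) (M + 1) i j
  | 0, hH, i, j => by
      simp [dlnProd]
  | M + 1, hH, i, j => by
      have h := dlnProd_ones_pos H M (fun l hl => hH l (by omega))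
      have : Nonempty (Fin (H (M + 1))) := ⟨⟨0, by have := hH (M + 1) (by omega); omega⟩⟩
      show 0 < ((Matrix.of fun _ _ => (1 : ℝ)) *
          dlnProd H (fun _ => Matrix.of fun _ _ => (1 : ℝ)) (M + 1) :
          Matrix (Fin (H (M + 2))) (Fin (H 0)) ℝ) i j
      rw [Matrix.mul_apply]
      apply Finset.sum_pos
      · intro k _
        simpa using h k j
      · exact Finset.univ_nonempty

/-- if the coordinates of the random input `X` are i.i.d. with finite
second moment and `E[X_j²] > 0`, then the expected loss
`L(w) = E‖f(X; w) − f(X; w₀)‖²` is a polynomial of total degree exactly `2M` in the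
matrix entries of `w`. -/
theorem dln_expected_loss_is_polynomial_of_degree_two_mul_layers
    (M : ℕ) (hM : 1 ≤ M) (H : ℕ → ℕ) (hH : ∀ l ≤ M, 1 ≤ H l)
    (w0 : ∀ l : ℕ, Matrix (Fin (H (l + 1))) (Fin (H l)) ℝ)
    (Ω : Type) [MeasurableSpace Ω] (P : Measure Ω) [IsProbabilityMeasure P]
    (X : Ω → Fin (H 0) → ℝ) (hmeas : Measurable X)
    (hindep : iIndepFun (fun j ω => X ω j) P)
    (hident : ∀ j j', IdentDistrib (fun ω => X ω j) (fun ω => X ω j') P P)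
    (hL2 : ∀ j, Integrable (fun ω => (X ω j) ^ 2) P)
    (hpos : ∀ j, 0 < ∫ ω, (X ω j) ^ 2 ∂P) :
    ∃ p : MvPolynomial (DlnVars H M) ℝ, p.totalDegree = 2 * M ∧
      ∀ w : ∀ l : ℕ, Matrix (Fin (H (l + 1))) (Fin (H l)) ℝ,
        (∫ ω, ∑ i : Fin (H M),
            ((dlnProd H w M).mulVec (X ω) i - (dlnProd H w0 M).mulVec (X ω) i) ^ 2 ∂P)
          = eval (fun v => w v.1.1 v.2.1 v.2.2) p := by
  classical
  obtain ⟨M', rfl⟩ : ∃ M', M = M' + 1 := ⟨M - 1, by omega⟩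
  set N := M' + 1 with hN
  haveI hne0 : Nonempty (Fin (H 0)) := ⟨⟨0, by have := hH 0 (by omega); omega⟩⟩
  haveI hneN : Nonempty (Fin (H N)) := ⟨⟨0, by have := hH N le_rfl; omega⟩⟩
  have hYmeas : ∀ j, Measurable (fun ω => X ω j) := fun j => (measurable_pi_apply j).comp hmeas
  -- integrability of products
  have hXmul : ∀ j j', Integrable (fun ω => X ω j * X ω j') P := by
    intro j j'
    refine Integrable.mono' (((hL2 j).add (hL2 j')).div_const 2)
      (((hYmeas j).mul (hYmeas j')).aestronglyMeasurable) ?_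
    filter_upwards with ω
    rw [Real.norm_eq_abs, abs_mul]
    simp only [Pi.add_apply]
    nlinarith [sq_nonneg (|X ω j| - |X ω j'|), sq_abs (X ω j), sq_abs (X ω j'),
      abs_nonneg (X ω j), abs_nonneg (X ω j')]
  have hX1 : ∀ j, Integrable (fun ω => X ω j) P := by
    intro j
    refine Integrable.mono' (((hL2 j).add (integrable_const 1)).div_const 2)
      ((hYmeas j).aestronglyMeasurable) ?_
    filter_upwards with ω
    rw [Real.norm_eq_abs]
    simp only [Pi.add_apply]
    nlinarith [sq_nonneg (|X ω j| - 1), sq_abs (X ω j), abs_nonneg (X ω j)]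
  -- second moments
  set c : Fin (H 0) → Fin (H 0) → ℝ := fun j j' => ∫ ω, X ω j * X ω j' ∂P with hc
  have hcdiag : ∀ j, 0 < c j j := by
    intro j
    have : (fun ω => X ω j * X ω j) = fun ω => (X ω j) ^ 2 := by
      funext ω; ring
    simp only [hc, this]
    exact hpos j
  have hcnn : ∀ j j', 0 ≤ c j j' := by
    intro j j'
    rcases eq_or_ne j j' with rfl | hne
    · exact (hcdiag j).le
    · have hind : IndepFun (fun ω => X ω j) (fun ω => X ω j') P := hindep.indepFun hne
      have hmul : c j j' = (∫ ω, X ω j ∂P) * (∫ ω, X ω j' ∂P) := by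
        have := hind.integral_fun_mul_eq_mul_integral (hYmeas j).aestronglyMeasurable (hYmeas j').aestronglyMeasurable
        simpa [hc] using this
      rw [hmul, ← (hident j j').integral_eq]
      exact mul_self_nonneg _
  -- the polynomial
  set Pm : Matrix (Fin (H N)) (Fin (H 0)) (MvPolynomial (DlnVars H N) ℝ) := dlnPoly H N with hPm
  set A0 : Matrix (Fin (H N)) (Fin (H 0)) ℝ := dlnProd H w0 N with hA0
  set q : MvPolynomial (DlnVars H N) ℝ :=
    ∑ i : Fin (H N), ∑ j : Fin (H 0), ∑ j' : Fin (H 0),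
      C (c j j') * (Pm i j * Pm i j') with hq
  set r : MvPolynomial (DlnVars H N) ℝ :=
    ∑ i : Fin (H N), ∑ j : Fin (H 0), ∑ j' : Fin (H 0),
      C (c j j') * (C (A0 i j) * C (A0 i j') - C (A0 i j) * Pm i j' - C (A0 i j') * Pm i j)
    with hr
  refine ⟨q + r, ?_, ?_⟩
  · -- total degree
    have hqhom : q.IsHomogeneous (2 * N) := by
      rw [hq]
      refine IsHomogeneous.sum _ _ _ fun i _ => ?_
      refine IsHomogeneous.sum _ _ _ fun j _ => ?_
      refine IsHomogeneous.sum _ _ _ fun j' _ => ?_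
      have := ((dlnPoly_homog H N i j).mul (dlnPoly_homog H N i j')).C_mul (c j j')
      rwa [two_mul]
    -- q is nonzero: positive evaluation at all-ones weights
    have hq0 : q ≠ 0 := by
      intro h0
      set wone : ∀ l : ℕ, Matrix (Fin (H (l + 1))) (Fin (H l)) ℝ :=
        fun _ => Matrix.of fun _ _ => (1 : ℝ) with hwone
      have hB : ∀ (i : Fin (H N)) (j : Fin (H 0)), 0 < dlnProd H wone N i j :=
        dlnProd_ones_pos H M' (fun l hl => hH l hl)
      have hev : eval (fun v : DlnVars H N => wone v.1.1 v.2.1 v.2.2) q = 0 := by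
        rw [h0]; simp
      have hpos' : 0 < eval (fun v : DlnVars H N => wone v.1.1 v.2.1 v.2.2) q := by
        rw [hq]
        simp only [map_sum, map_mul, eval_C, hPm, dlnPoly_eval]
        refine Finset.sum_pos (fun i _ => ?_) Finset.univ_nonempty
        refine Finset.sum_pos' (fun j _ => Finset.sum_nonneg fun j' _ =>
          mul_nonneg (hcnn j j') (mul_nonneg (hB i j).le (hB i j').le)) ?_
        refine ⟨Classical.arbitrary _, Finset.mem_univ _, ?_⟩
        refine Finset.sum_pos' (fun j' _ =>
          mul_nonneg (hcnn _ j') (mul_nonneg (hB i _).le (hB i j').le)) ?_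
        exact ⟨Classical.arbitrary _, Finset.mem_univ _,
          mul_pos (hcdiag _) (mul_pos (hB i _) (hB i _))⟩
      rw [hev] at hpos'
      exact lt_irrefl _ hpos'
    have hqdeg : q.totalDegree = 2 * N := hqhom.totalDegree hq0
    have hrdeg : r.totalDegree < 2 * N := by
      have hbound : r.totalDegree ≤ N := by
        rw [hr]
        refine (totalDegree_finset_sum _ _).trans (Finset.sup_le fun i _ => ?_)
        refine (totalDegree_finset_sum _ _).trans (Finset.sup_le fun j _ => ?_)
        refine (totalDegree_finset_sum _ _).trans (Finset.sup_le fun j' _ => ?_)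
        refine (totalDegree_mul _ _).trans ?_
        rw [totalDegree_C, zero_add]
        have hPdeg : ∀ (a : Fin (H N)) (b : Fin (H 0)), (Pm a b).totalDegree ≤ N :=
          fun a b => (dlnPoly_homog H N a b).totalDegree_le
        have h1 : (C (A0 i j) * C (A0 i j') : MvPolynomial (DlnVars H N) ℝ).totalDegree ≤ N := by
          rw [← C_mul, totalDegree_C]; omega
        have h2 : (C (A0 i j) * Pm i j' : MvPolynomial (DlnVars H N) ℝ).totalDegree ≤ N := by
          refine (totalDegree_mul _ _).trans ?_
          rw [totalDegree_C, zero_add]; exact hPdeg i j'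
        have h3 : (C (A0 i j') * Pm i j : MvPolynomial (DlnVars H N) ℝ).totalDegree ≤ N := by
          refine (totalDegree_mul _ _).trans ?_
          rw [totalDegree_C, zero_add]; exact hPdeg i j
        refine (totalDegree_sub _ _).trans ?_
        refine max_le ((totalDegree_sub _ _).trans (max_le h1 h2)) h3
      omega
    rw [totalDegree_add_eq_left_of_totalDegree_lt (by rw [hqdeg]; exact hrdeg), hqdeg]
  · -- evaluation identity
    intro w
    set A : Matrix (Fin (H N)) (Fin (H 0)) ℝ := dlnProd H w N with hA
    set D : Fin (H N) → Fin (H 0) → ℝ := fun i j => A i j - A0 i j with hD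
    have hfun : ∀ ω, (∑ i : Fin (H N), (A.mulVec (X ω) i - A0.mulVec (X ω) i) ^ 2)
        = ∑ i : Fin (H N), ∑ j : Fin (H 0), ∑ j' : Fin (H 0),
            (D i j * D i j') * (X ω j * X ω j') := by
      intro ω
      refine Finset.sum_congr rfl fun i _ => ?_
      have hDi : A.mulVec (X ω) i - A0.mulVec (X ω) i = ∑ j, D i j * X ω j := by
        simp [Matrix.mulVec, dotProduct, hD, sub_mul, Finset.sum_sub_distrib]
      rw [hDi, sq, Finset.sum_mul_sum]
      exact Finset.sum_congr rfl fun j _ => Finset.sum_congr rfl fun j' _ => by ring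
    have hint1 : ∀ (i : Fin (H N)) (j j' : Fin (H 0)),
        Integrable (fun ω => (D i j * D i j') * (X ω j * X ω j')) P :=
      fun i j j' => (hXmul j j').const_mul _
    calc (∫ ω, ∑ i : Fin (H N), (A.mulVec (X ω) i - A0.mulVec (X ω) i) ^ 2 ∂P)
        = ∫ ω, ∑ i : Fin (H N), ∑ j : Fin (H 0), ∑ j' : Fin (H 0),
            (D i j * D i j') * (X ω j * X ω j') ∂P := by
          exact integral_congr_ae (Filter.Eventually.of_forall hfun)
      _ = ∑ i : Fin (H N), ∑ j : Fin (H 0), ∑ j' : Fin (H 0), (D i j * D i j') * c j j' := by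
          rw [integral_finset_sum _ fun i _ => integrable_finset_sum _ fun j _ =>
            integrable_finset_sum _ fun j' _ => hint1 i j j']
          refine Finset.sum_congr rfl fun i _ => ?_
          rw [integral_finset_sum _ fun j _ => integrable_finset_sum _ fun j' _ => hint1 i j j']
          refine Finset.sum_congr rfl fun j _ => ?_
          rw [integral_finset_sum _ fun j' _ => hint1 i j j']
          exact Finset.sum_congr rfl fun j' _ => integral_const_mul _ _
      _ = eval (fun v : DlnVars H N => w v.1.1 v.2.1 v.2.2) (q + r) := by
          rw [map_add, hq, hr]
          simp only [map_sum, map_mul, map_sub, eval_C, hPm, dlnPoly_eval, ← hA]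
          rw [← Finset.sum_add_distrib]
          refine Finset.sum_congr rfl fun i _ => ?_
          rw [← Finset.sum_add_distrib]
          refine Finset.sum_congr rfl fun j _ => ?_
          rw [← Finset.sum_add_distrib]
          refine Finset.sum_congr rfl fun j' _ => ?_
          simp only [hD]
          ring
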